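/- Let G be a connected semisimple Lie group and K ⊂ H compact Lie subgroups of G. Let M_F and M_C be the tangent spaces at the origin of F = H/K and C = G/H respectively. Then for a, b ∈ ℝ⁺ the metric g_{a,b} = a·B|_{M_F} + b·B|_{M_C} is a g.o. metric on G/K if and only if for every v_F ∈ M_F and every v_C ∈ M_C there exists X ∈ 𝔨 such that [X, v_F] = 0 and [X + v_F, v_C] = 0. -/

import Mathlib

open Module

/-- A nonzero `X ∈ 𝔤` is a *geodesic vector* when the orbit `γ(t) = exp(tX)·o` is a
geodesic of the homogeneous Riemannian manifold `(G/K, g)`.  Since homogeneous Riemannian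
geometry is not available in Mathlib, we encode this notion by its standard algebraic
characterization (Kowalski–Vanhecke): `⟨[X,Y]_𝔪, X_𝔪⟩ = 0` for all `Y ∈ 𝔪`, where
`⟨u, v⟩ = B(Λu, v)`, `B = -Killing form`, `Λ` is the associated operator of `g` and
`p` is the projection of `𝔤` onto `𝔪` along `𝔨`. -/
def IsGeodesicVector {𝔤 : Type*} [LieRing 𝔤] [LieAlgebra ℝ 𝔤]
    (𝔪 : Submodule ℝ 𝔤) (p Λ : 𝔤 →ₗ[ℝ] 𝔤) (X : 𝔤) : Prop :=
  ∀ Y ∈ 𝔪, -(killingForm ℝ 𝔤 (Λ (p ⁅X, Y⁆)) (p X)) = 0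

/-- `(G/K, g)` is a g.o. space: every geodesic through the origin `o = eK` is
homogeneous. -/
def IsGOMetric {𝔤 : Type*} [LieRing 𝔤] [LieAlgebra ℝ 𝔤]
    (𝔨 : LieSubalgebra ℝ 𝔤) (𝔪 : Submodule ℝ 𝔤) (p Λ : 𝔤 →ₗ[ℝ] 𝔤) : Prop :=
  ∀ x ∈ 𝔪, x ≠ (0 : 𝔤) → ∃ a ∈ 𝔨, IsGeodesicVector 𝔪 p Λ (a + x)

/-- **Proposition (Gordon; Tamaru)**.
Let `G` be a connected semisimple Lie group and `K ⊂ H` compact subgroups, with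
`M_F` and `M_C` the tangent spaces of `F = H/K` and `C = G/H`.  The metric
`g_{a,b} = a B|_{M_F} + b B|_{M_C}` (`a, b ∈ ℝ⁺`) is a g.o. metric on `G/K` if and only
if for every `v_F ∈ M_F`, `v_C ∈ M_C` there is `X ∈ 𝔨` with
`[X, v_F] = 0` and `[X + v_F, v_C] = 0`. -/
theorem gordon_tamaru_criterion
    {𝔤 : Type*} [LieRing 𝔤] [LieAlgebra ℝ 𝔤] [FiniteDimensional ℝ 𝔤]
    -- `G` connected semisimple: the Killing form of `𝔤` is nondegenerate
    (hss : (killingForm ℝ 𝔤).Nondegenerate)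
    -- `K ⊂ H` are compact subgroups of `G`
    (𝔨 𝔥 : LieSubalgebra ℝ 𝔤) (h𝔨𝔥 : 𝔨 ≤ 𝔥)
    (hcpt : ∀ x : 𝔤, x ∈ 𝔥 → x ≠ 0 → killingForm ℝ 𝔤 x x < 0)
    -- `M_F` is the `B`-orthogonal complement of `𝔨` in `𝔥`
    (MF : Submodule ℝ 𝔤) (hMF𝔥 : MF ≤ 𝔥.toSubmodule)
    (hMFsum : 𝔨.toSubmodule ⊔ MF = 𝔥.toSubmodule) (hMFdisj : Disjoint 𝔨.toSubmodule MF)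
    (hMForth : ∀ x ∈ 𝔨, ∀ y ∈ MF, killingForm ℝ 𝔤 x y = 0)
    -- `M_C` is the `B`-orthogonal complement of `𝔥` in `𝔤`
    (MC : Submodule ℝ 𝔤)
    (hMCsum : 𝔥.toSubmodule ⊔ MC = ⊤) (hMCdisj : Disjoint 𝔥.toSubmodule MC)
    (hMCorth : ∀ x ∈ 𝔥, ∀ y ∈ MC, killingForm ℝ 𝔤 x y = 0)
    -- `p` is the projection onto the tangent space `𝔪 = M_F ⊕ M_C` of `G/K` along `𝔨`
    (p : 𝔤 →ₗ[ℝ] 𝔤)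
    (hp𝔪 : ∀ x ∈ MF ⊔ MC, p x = x) (hp𝔨 : ∀ x ∈ 𝔨, p x = 0)
    (hpr : ∀ x : 𝔤, p x ∈ MF ⊔ MC) :
    -- the metrics `g_{a,b} = a B|_{M_F} + b B|_{M_C}`, `a, b ∈ ℝ⁺`, are g.o. metrics
    (∀ a b : ℝ, 0 < a → 0 < b → ∀ Λ : 𝔤 →ₗ[ℝ] 𝔤,
        (∀ x ∈ MF, Λ x = a • x) → (∀ x ∈ MC, Λ x = b • x) →
        IsGOMetric 𝔨 (MF ⊔ MC) p Λ) ↔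
      ∀ vF ∈ MF, ∀ vC ∈ MC, ∃ X ∈ 𝔨, ⁅X, vF⁆ = (0 : 𝔤) ∧ ⁅X + vF, vC⁆ = (0 : 𝔤) := by
  have Bsymm : ∀ u v : 𝔤, killingForm ℝ 𝔤 u v = killingForm ℝ 𝔤 v u :=
    fun u v => LieModule.traceForm_comm ℝ 𝔤 𝔤 u v
  have Blie : ∀ u v w : 𝔤,
      killingForm ℝ 𝔤 ⁅u, v⁆ w = -killingForm ℝ 𝔤 v ⁅u, w⁆ :=
    fun u v w => LieModule.traceForm_apply_lie_apply' ℝ 𝔤 𝔤 u v w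
  -- decomposition 𝔤 = 𝔨 ⊕ MF ⊕ MC
  have hdec : ∀ w : 𝔤, ∃ k ∈ 𝔨.toSubmodule, ∃ f ∈ MF, ∃ c ∈ MC, w = k + f + c := by
    intro w
    have hw : w ∈ 𝔥.toSubmodule ⊔ MC := by rw [hMCsum]; trivial
    obtain ⟨h, hh, c, hc, hw⟩ := Submodule.mem_sup.mp hw
    rw [← hMFsum] at hh
    obtain ⟨k, hk, f, hf, hh'⟩ := Submodule.mem_sup.mp hh
    exact ⟨k, hk, f, hf, c, hc, by rw [← hw, ← hh']⟩
  -- [𝔥, MC] ⊆ MC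
  have hbrHC : ∀ h ∈ 𝔥, ∀ c ∈ MC, ⁅h, c⁆ ∈ MC := by
    intro h hh c hc
    have horth : ∀ h' ∈ 𝔥, killingForm ℝ 𝔤 ⁅h, c⁆ h' = 0 := by
      intro h' hh'
      rw [Blie]
      have : killingForm ℝ 𝔤 ⁅h, h'⁆ c = 0 :=
        hMCorth _ (𝔥.lie_mem hh hh') c hc
      rw [Bsymm] at this
      rw [this, neg_zero]
    obtain ⟨k, hk, f, hf, c₀, hc₀, he⟩ := hdec ⁅h, c⁆
    have hh₀ : k + f ∈ 𝔥.toSubmodule := by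
      rw [← hMFsum]; exact add_mem (Submodule.mem_sup_left hk) (Submodule.mem_sup_right hf)
    have hBh₀ : killingForm ℝ 𝔤 (k + f) (k + f) = 0 := by
      have h1 : killingForm ℝ 𝔤 ⁅h, c⁆ (k + f) = 0 := horth _ hh₀
      have h2 : killingForm ℝ 𝔤 c₀ (k + f) = 0 := by
        rw [Bsymm]; exact hMCorth _ hh₀ c₀ hc₀
      rw [he] at h1
      have h3 : killingForm ℝ 𝔤 (k + f) (k + f) + killingForm ℝ 𝔤 c₀ (k + f) = 0 := by
        rw [← LinearMap.add_apply, ← map_add]; exact h1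
      rw [h2, add_zero] at h3
      exact h3
    have hkf0 : k + f = 0 := by
      by_contra hne
      exact absurd hBh₀ (ne_of_lt (hcpt _ hh₀ hne))
    have : (⁅h, c⁆ : 𝔤) = c₀ := by rw [he, hkf0, zero_add]
    rw [this]; exact hc₀
  -- the key pairing identity
  have keyAll : ∀ a b : ℝ, ∀ Λ : 𝔤 →ₗ[ℝ] 𝔤,
      (∀ x ∈ MF, Λ x = a • x) → (∀ x ∈ MC, Λ x = b • x) →
      ∀ vF ∈ MF, ∀ vC ∈ MC, ∀ W : 𝔤,
      killingForm ℝ 𝔤 (Λ (p W)) (vF + vC) = killingForm ℝ 𝔤 W (a • vF + b • vC) := by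
    intro a b Λ hΛF hΛC vF hvF vC hvC W
    obtain ⟨k, hk, f, hf, c, hc, rfl⟩ := hdec W
    have hfc : f + c ∈ MF ⊔ MC :=
      add_mem (Submodule.mem_sup_left hf) (Submodule.mem_sup_right hc)
    have hpW : p (k + f + c) = f + c := by
      rw [add_assoc, map_add, hp𝔨 k hk, hp𝔪 _ hfc, zero_add]
    have hΛ : Λ (f + c) = a • f + b • c := by rw [map_add, hΛF f hf, hΛC c hc]
    have e1 : killingForm ℝ 𝔤 f vC = 0 := hMCorth f (hMF𝔥 hf) vC hvC
    have e2 : killingForm ℝ 𝔤 c vF = 0 := by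
      rw [Bsymm]; exact hMCorth vF (hMF𝔥 hvF) c hc
    have e3 : killingForm ℝ 𝔤 k vF = 0 := hMForth k hk vF hvF
    have e4 : killingForm ℝ 𝔤 k vC = 0 := hMCorth k (h𝔨𝔥 hk) vC hvC
    rw [hpW, hΛ]
    simp only [map_add, map_smul, LinearMap.add_apply, LinearMap.smul_apply, smul_eq_mul,
      e1, e2, e3, e4, mul_zero, add_zero, zero_add]
  constructor
  · -- GO metrics ⟹ algebraic criterion
    intro hGO vF hvF vC hvC
    by_cases hx0 : vF + vC = 0
    · have hvC𝔥 : vC ∈ 𝔥.toSubmodule := by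
        have : vC = -vF := by
          have := hx0; exact eq_neg_of_add_eq_zero_right this
        rw [this]; exact neg_mem (hMF𝔥 hvF)
      have hvC0 : vC = 0 := Submodule.disjoint_def.mp hMCdisj vC hvC𝔥 hvC
      have hvF0 : vF = 0 := by
        have := hx0; rw [hvC0, add_zero] at this; exact this
      exact ⟨0, 𝔨.zero_mem, by simp [hvF0, hvC0]⟩
    · -- construct the operator Λ for a = 1, b = 2
      have hcompl : IsCompl 𝔥.toSubmodule MC := ⟨hMCdisj, codisjoint_iff.mpr hMCsum⟩
      set πC : 𝔤 →ₗ[ℝ] 𝔤 :=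
        MC.subtype ∘ₗ Submodule.projectionOnto MC 𝔥.toSubmodule hcompl.symm with hπC
      have hπCH : ∀ x ∈ 𝔥.toSubmodule, πC x = 0 := by
        intro x hx
        simp only [hπC, LinearMap.comp_apply,
          Submodule.projectionOnto_apply_of_mem_right hcompl.symm hx, Submodule.coe_zero,
          map_zero]
      have hπCC : ∀ x ∈ MC, πC x = x := by
        intro x hx
        have := Submodule.projectionOnto_apply_left hcompl.symm ⟨x, hx⟩
        simp only [hπC, LinearMap.comp_apply]
        rw [this]
        rfl
      set Λ : 𝔤 →ₗ[ℝ] 𝔤 := p + πC with hΛdef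
      have hΛF : ∀ x ∈ MF, Λ x = (1 : ℝ) • x := by
        intro x hx
        simp only [hΛdef, LinearMap.add_apply, hp𝔪 x (Submodule.mem_sup_left hx),
          hπCH x (hMF𝔥 hx), add_zero, one_smul]
      have hΛC : ∀ x ∈ MC, Λ x = (2 : ℝ) • x := by
        intro x hx
        simp only [hΛdef, LinearMap.add_apply, hp𝔪 x (Submodule.mem_sup_right hx),
          hπCC x hx]
        rw [two_smul]
      have hxm : vF + vC ∈ MF ⊔ MC :=
        add_mem (Submodule.mem_sup_left hvF) (Submodule.mem_sup_right hvC)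
      obtain ⟨Z, hZ, hgeo⟩ :=
        hGO 1 2 one_pos two_pos Λ hΛF hΛC (vF + vC) hxm hx0
      -- rewrite the geodesic-vector condition
      have hpZx : p (Z + (vF + vC)) = vF + vC := by
        rw [map_add, hp𝔨 Z hZ, hp𝔪 _ hxm, zero_add]
      set W : 𝔤 := ⁅Z + (vF + vC), (1 : ℝ) • vF + (2 : ℝ) • vC⁆ with hWdef
      have hgeo' : ∀ Y ∈ MF ⊔ MC, killingForm ℝ 𝔤 Y W = 0 := by
        intro Y hY
        have h0 := hgeo Y hY
        rw [hpZx, keyAll 1 2 Λ hΛF hΛC vF hvF vC hvC, Blie, neg_neg] at h0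
        exact h0
      -- expansion of W
      have hWexp : W = ⁅Z, vF⁆ + ((2 : ℝ) • ⁅Z, vC⁆ + ⁅vF, vC⁆) := by
        simp only [hWdef, add_lie, lie_add, lie_smul, lie_self, smul_zero, one_smul]
        rw [← lie_skew vC vF]
        module
      -- W is orthogonal to 𝔨 as well
      have hW𝔨 : ∀ k ∈ 𝔨, killingForm ℝ 𝔤 W k = 0 := by
        intro k hk
        have t1 : killingForm ℝ 𝔤 ⁅Z, vF⁆ k = 0 := by
          rw [Blie]
          have : killingForm ℝ 𝔤 vF ⁅Z, k⁆ = 0 := by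
            rw [Bsymm]; exact hMForth _ (𝔨.lie_mem hZ hk) vF hvF
          rw [this, neg_zero]
        have t2 : killingForm ℝ 𝔤 ⁅Z, vC⁆ k = 0 := by
          rw [Blie]
          have : killingForm ℝ 𝔤 vC ⁅Z, k⁆ = 0 := by
            rw [Bsymm]; exact hMCorth _ (h𝔨𝔥 (𝔨.lie_mem hZ hk)) vC hvC
          rw [this, neg_zero]
        have t3 : killingForm ℝ 𝔤 ⁅vF, vC⁆ k = 0 := by
          rw [Blie]
          have : killingForm ℝ 𝔤 vC ⁅vF, k⁆ = 0 := by
            rw [Bsymm]; exact hMCorth _ (𝔥.lie_mem (hMF𝔥 hvF) (h𝔨𝔥 hk)) vC hvC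
          rw [this, neg_zero]
        rw [hWexp]
        simp only [map_add, map_smul, LinearMap.add_apply, LinearMap.smul_apply,
          t1, t2, t3, smul_eq_mul, mul_zero, add_zero, zero_add]
      -- W = 0 by nondegeneracy
      have hW0 : W = 0 := by
        apply hss.1
        intro n
        obtain ⟨k, hk, f, hf, c, hc, rfl⟩ := hdec n
        have u1 : killingForm ℝ 𝔤 W k = 0 := hW𝔨 k hk
        have u2 : killingForm ℝ 𝔤 W f = 0 := by
          rw [Bsymm]; exact hgeo' f (Submodule.mem_sup_left hf)
        have u3 : killingForm ℝ 𝔤 W c = 0 := by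
          rw [Bsymm]; exact hgeo' c (Submodule.mem_sup_right hc)
        simp only [map_add, u1, u2, u3, add_zero, zero_add]
      -- split W = 0 into components
      have hZvF𝔥 : (⁅Z, vF⁆ : 𝔤) ∈ 𝔥.toSubmodule := 𝔥.lie_mem (h𝔨𝔥 hZ) (hMF𝔥 hvF)
      have hrestC : ((2 : ℝ) • ⁅Z, vC⁆ + ⁅vF, vC⁆ : 𝔤) ∈ MC :=
        add_mem (Submodule.smul_mem MC _ (hbrHC Z (h𝔨𝔥 hZ) vC hvC))
          (hbrHC vF (hMF𝔥 hvF) vC hvC)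
      have hZvF' : (⁅Z, vF⁆ : 𝔤) ∈ MC := by
        have : (⁅Z, vF⁆ : 𝔤) = -((2 : ℝ) • ⁅Z, vC⁆ + ⁅vF, vC⁆) := by
          have := hW0; rw [hWexp] at this
          exact eq_neg_of_add_eq_zero_left this
        rw [this]; exact neg_mem hrestC
      have hZvF0 : (⁅Z, vF⁆ : 𝔤) = 0 :=
        Submodule.disjoint_def.mp hMCdisj _ hZvF𝔥 hZvF'
      have hrest0 : ((2 : ℝ) • ⁅Z, vC⁆ + ⁅vF, vC⁆ : 𝔤) = 0 := by
        have := hW0; rw [hWexp, hZvF0, zero_add] at this; exact this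
      refine ⟨(2 : ℝ) • Z, 𝔨.smul_mem _ hZ, ?_, ?_⟩
      · rw [smul_lie, hZvF0, smul_zero]
      · rw [add_lie, smul_lie]
        exact hrest0
  · -- algebraic criterion ⟹ GO metrics
    intro hrhs a b ha hb Λ hΛF hΛC x hx hx0
    obtain ⟨vF, hvF, vC, hvC, rfl⟩ := Submodule.mem_sup.mp hx
    obtain ⟨X, hX, hXF, hXC⟩ := hrhs vF hvF vC hvC
    have hXvC : (⁅X, vC⁆ : 𝔤) = -⁅vF, vC⁆ := by
      rw [add_lie] at hXC
      exact eq_neg_of_add_eq_zero_left hXC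
    set Z : 𝔤 := ((b - a) / b) • X with hZdef
    have hZ𝔨 : Z ∈ 𝔨 := 𝔨.smul_mem _ hX
    refine ⟨Z, hZ𝔨, ?_⟩
    intro Y hY
    have hxm : vF + vC ∈ MF ⊔ MC :=
      add_mem (Submodule.mem_sup_left hvF) (Submodule.mem_sup_right hvC)
    have hpZx : p (Z + (vF + vC)) = vF + vC := by
      rw [map_add, hp𝔨 Z hZ𝔨, hp𝔪 _ hxm, zero_add]
    have hbr : (⁅Z + (vF + vC), a • vF + b • vC⁆ : 𝔤) = 0 := by
      have hexp : (⁅Z + (vF + vC), a • vF + b • vC⁆ : 𝔤)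
          = (a * ((b - a) / b)) • ⁅X, vF⁆
            + ((b * ((b - a) / b)) • ⁅X, vC⁆ + (b - a) • ⁅vF, vC⁆) := by
        simp only [hZdef, add_lie, lie_add, lie_smul, smul_lie, lie_self, smul_zero,
          smul_smul]
        rw [← lie_skew vC vF]
        module
      have hcoef : b * ((b - a) / b) = b - a := by field_simp
      rw [hexp, hXF, hXvC, hcoef, smul_zero, zero_add, smul_neg, neg_add_cancel]
    rw [hpZx, keyAll a b Λ hΛF hΛC vF hvF vC hvC, Blie, hbr, map_zero, neg_neg]
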